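/- Let K be a field of characteristic p > 0, S = K[x₁,…,xₙ], and let f ∈ S be a nonzero square-free supported polynomial. Then for every e ≥ 1, setting q = p^e, the polynomial f^{q−1} does not belong to the ideal (x₁^q, …, xₙ^q) of S. (By Fedder's criterion, this says that S/(f) is F-split along the maximal ideal (x₁,…,xₙ) whenever f ∈ (x₁,…,xₙ).) -/
import Mathlib

open MvPolynomial

/-- A multivariate polynomial is *square-free supported* if every monomial in its support
is square-free, i.e. every variable occurs with exponent at most `1`. -/
def SquarefreeSupported {R : Type*} [CommSemiring R] {n : ℕ}
    (f : MvPolynomial (Fin n) R) : Prop :=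
  ∀ m ∈ f.support, ∀ i : Fin n, m i ≤ 1

/-- Every monomial of a product lies in the sumset of the supports. -/
lemma pow_support_le {K : Type*} [Field K] {n : ℕ} (f : MvPolynomial (Fin n) K)
    (hsq : ∀ m ∈ f.support, ∀ i : Fin n, m i ≤ 1) (k : ℕ) :
    ∀ u ∈ (f ^ k).support, ∀ i : Fin n, u i ≤ k := by
  induction k with
  | zero =>
    intro u hu i
    rw [pow_zero] at hu
    rw [MvPolynomial.mem_support_iff] at hu
    by_contra h
    push_neg at h
    have : u ≠ 0 := by
      intro h0; subst h0; simp at h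
    exact hu (by rw [MvPolynomial.coeff_one, if_neg (fun h' => this h'.symm)])
  | succ k ih =>
    intro u hu i
    rw [pow_succ] at hu
    have := MvPolynomial.support_mul _ _ hu
    rcases Finset.mem_add.mp this with ⟨a, ha, b, hb, rfl⟩
    have h1 := ih a ha i
    have h2 := hsq b hb i
    simpa [Finsupp.add_apply] using Nat.add_le_add h1 h2

theorem fedder_of_squarefreeSupported {K : Type*} [Field K] {p : ℕ} (hp : p.Prime)
    [CharP K p] {n : ℕ} (f : MvPolynomial (Fin n) K) (hf : f ≠ 0)
    (hsq : SquarefreeSupported f) (e : ℕ) (he : 1 ≤ e) :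
    f ^ (p ^ e - 1) ∉
      Ideal.span (Set.range fun i : Fin n =>
        (MvPolynomial.X i : MvPolynomial (Fin n) K) ^ (p ^ e)) := by
  intro hmem
  set q := p ^ e with hq
  -- every element of the ideal has, in each monomial, some exponent ≥ q
  have key : ∀ g ∈ Ideal.span (Set.range fun i : Fin n =>
      (MvPolynomial.X i : MvPolynomial (Fin n) K) ^ q),
      ∀ u ∈ g.support, ∃ i : Fin n, q ≤ u i := by
    intro g hg
    refine Submodule.span_induction ?_ ?_ ?_ ?_ hg
    · rintro x ⟨i, rfl⟩ u hu
      simp only [MvPolynomial.X_pow_eq_monomial] at hu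
      have := MvPolynomial.support_monomial_subset hu
      simp only [Finset.mem_singleton] at this
      exact ⟨i, by simp [this]⟩
    · intro u hu; simp at hu
    · intro x y _ _ hx hy u hu
      have := MvPolynomial.support_add (p := x) (q := y) hu
      rcases Finset.mem_union.mp this with h | h
      · exact hx u h
      · exact hy u h
    · intro a x _ hx u hu
      have : u ∈ (a * x).support := hu
      have := MvPolynomial.support_mul _ _ this
      rcases Finset.mem_add.mp this with ⟨s, _, t, ht, rfl⟩
      obtain ⟨i, hi⟩ := hx t ht
      exact ⟨i, le_trans hi (by simp [Finsupp.add_apply])⟩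
  -- f^(q-1) ≠ 0, so it has a monomial; all its exponents are ≤ q-1 < q
  have hne : f ^ (q - 1) ≠ 0 := pow_ne_zero _ hf
  obtain ⟨u, hu⟩ := (MvPolynomial.support_nonempty.mpr hne)
  obtain ⟨i, hi⟩ := key _ hmem u hu
  have hle : u i ≤ q - 1 := pow_support_le f hsq (q - 1) u hu i
  have hq1 : 1 ≤ q := Nat.one_le_pow _ _ hp.pos
  omega
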